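/- For a polynomial one-form p : V → L(V,U) of degree n and a continuous bounded-variation path x : [S,T] → V with x_S = 0, the classical integral equals a linear combination of iterated integrals: ∫_S^T p(x_r) dx_r = Σ_{k=0}^{n} (D^k p)(0) X^{k+1}_{S,T}, where X^{k+1}_{S,T} = ∫_{S<u₁<⋯<u_{k+1}<T} dx_{u₁} ⊗ ⋯ ⊗ dx_{u_{k+1}}. -/

import Mathlib

open MeasureTheory intervalIntegral

/-- The iterated integral `∫_{S < u₀ < ⋯ < u_{k-1} < T} f(u) du` over the ordered
simplex, defined by integrating out the last (largest) variable. -/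
noncomputable def simplexIntegral {U : Type*} [NormedAddCommGroup U] [NormedSpace ℝ U] :
    (k : ℕ) → ((Fin k → ℝ) → U) → ℝ → ℝ → U
  | 0, f, _, _ => f Fin.elim0
  | k + 1, f, S, T => ∫ t in S..T, simplexIntegral k (fun u => f (Fin.snoc u t)) S t

section aux

variable {V U : Type*} [NormedAddCommGroup V] [NormedSpace ℝ V]
    [NormedAddCommGroup U] [NormedSpace ℝ U] [CompleteSpace U]

lemma snoc_comp_swap {k : ℕ} (a : Fin k → V) (w : V) (i j : Fin k) :
    (Fin.snoc a w : Fin (k+1) → V) ∘ (Equiv.swap i.castSucc j.castSucc) =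
      Fin.snoc (a ∘ Equiv.swap i j) w := by
  funext m
  refine Fin.lastCases ?_ (fun q => ?_) m
  · simp [Function.comp,
      Equiv.swap_apply_of_ne_of_ne (Fin.castSucc_lt_last i).ne' (Fin.castSucc_lt_last j).ne']
  · simp [Function.comp, (Fin.castSucc_injective k).swap_apply]

lemma update_const_eq_snoc {k : ℕ} (c v : V) :
    Function.update (fun _ : Fin (k+1) => c) (Fin.last k) v = Fin.snoc (fun _ : Fin k => c) v := by
  funext m
  refine Fin.lastCases ?_ (fun q => ?_) m
  · simp
  · simp [Function.update_apply, (Fin.castSucc_lt_last q).ne, Fin.snoc_castSucc]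

lemma aux_key (x : ℝ → V) (hx : ContDiff ℝ 1 x) (S : ℝ) :
    ∀ (k : ℕ) (M : ContinuousMultilinearMap ℝ (fun _ : Fin k => V) U),
      (∀ (a : Fin k → V) (i j : Fin k), M a = M (a ∘ Equiv.swap i j)) → ∀ (t : ℝ),
      simplexIntegral k (fun u => M (fun i => deriv x (u i))) S t
        = ((Nat.factorial k : ℝ))⁻¹ • M (fun _ => x t - x S) := by
  intro k
  induction k with
  | zero =>
    intro M _ t
    simp only [simplexIntegral, Nat.factorial_zero, Nat.cast_one, inv_one, one_smul]
    congr 1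
    exact funext fun i => i.elim0
  | succ k ih =>
    intro M hM t
    have hxd : Differentiable ℝ x := hx.differentiable one_ne_zero
    have hxc : Continuous (deriv x) := hx.continuous_deriv le_rfl
    -- the inner multilinear map with last argument fixed
    set N : ℝ → ContinuousMultilinearMap ℝ (fun _ : Fin k => V) U := fun s =>
      (ContinuousLinearMap.apply ℝ U (deriv x s)).compContinuousMultilinearMap M.curryRight
      with hN
    have hNapp : ∀ s (v : Fin k → V), N s v = M (Fin.snoc v (deriv x s)) := by
      intro s v; rfl
    have hstep : ∀ s, simplexIntegral k
        (fun u => M (fun i => deriv x ((Fin.snoc u s : Fin (k+1) → ℝ) i))) S s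
        = ((Nat.factorial k : ℝ))⁻¹ • M (Fin.snoc (fun _ => x s - x S) (deriv x s)) := by
      intro s
      have h1 : (fun u : Fin k → ℝ => M (fun i => deriv x ((Fin.snoc u s : Fin (k+1) → ℝ) i)))
          = fun u => N s (fun i => deriv x (u i)) := by
        funext u
        rw [hNapp]
        congr 1
        exact (Fin.comp_snoc (deriv x) u s)
      rw [h1, ih (N s) (fun a i j => by
        rw [hNapp, hNapp, ← snoc_comp_swap]
        exact hM _ i.castSucc j.castSucc) s, hNapp]
    -- FTC
    have hg : ∀ s : ℝ, HasDerivAt (fun r => ((Nat.factorial (k+1) : ℝ))⁻¹ • M (fun _ => x r - x S))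
        (((Nat.factorial k : ℝ))⁻¹ • M (Fin.snoc (fun _ => x s - x S) (deriv x s))) s := by
      intro s
      have hh : HasDerivAt (fun r => (fun _ : Fin (k+1) => x r - x S))
          (fun _ => deriv x s) s := by
        rw [hasDerivAt_pi]
        intro i
        simpa using ((hxd s).hasDerivAt.sub_const (x S))
      have := (M.hasFDerivAt (fun _ : Fin (k+1) => x s - x S)).comp_hasDerivAt s hh
      have heval : M.linearDeriv (fun _ : Fin (k+1) => x s - x S) (fun _ => deriv x s)
          = (k+1 : ℝ) • M (Fin.snoc (fun _ => x s - x S) (deriv x s)) := by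
        rw [ContinuousMultilinearMap.linearDeriv_apply]
        have hterm : ∀ i : Fin (k+1),
            M (Function.update (fun _ => x s - x S) i (deriv x s))
              = M (Fin.snoc (fun _ => x s - x S) (deriv x s)) := by
          intro i
          rw [← update_const_eq_snoc]
          rw [hM (Function.update (fun _ => x s - x S) i (deriv x s)) i (Fin.last k)]
          congr 1
          funext m
          rcases eq_or_ne m i with rfl | hmi
          · simp [Function.update_apply, eq_comm]
          · rcases eq_or_ne m (Fin.last k) with rfl | hml
            · simp [Function.update_apply, hmi.symm]
            · simp [Function.comp, Equiv.swap_apply_of_ne_of_ne hmi hml,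
                Function.update_apply, hmi, hml]
        rw [Finset.sum_congr rfl (fun i _ => hterm i)]
        simp [Finset.card_univ, ← Nat.cast_smul_eq_nsmul ℝ]
      rw [heval] at this
      have := this.const_smul (((Nat.factorial (k+1) : ℝ))⁻¹)
      convert this using 1
      · rfl
      rw [smul_smul]
      congr 1
      rw [Nat.factorial_succ]
      push_cast
      rw [mul_comm ((k:ℝ)+1)]
      rw [mul_inv, mul_assoc, inv_mul_cancel₀ (by positivity)]
      ring
    have hcont : Continuous fun s =>
        ((Nat.factorial k : ℝ))⁻¹ • M (Fin.snoc (fun _ => x s - x S) (deriv x s)) := by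
      apply Continuous.const_smul
      apply M.coe_continuous.comp
      apply continuous_pi
      intro j
      refine Fin.lastCases ?_ (fun q => ?_) j
      · simpa using hxc
      · simp only [Fin.snoc_castSucc]
        exact hx.continuous.sub continuous_const
    show (∫ s in S..t, simplexIntegral k (fun u => M (fun i => deriv x ((Fin.snoc u s : Fin (k+1) → ℝ) i))) S s) = _
    rw [intervalIntegral.integral_congr (g := fun s =>
        ((Nat.factorial k : ℝ))⁻¹ • M (Fin.snoc (fun _ => x s - x S) (deriv x s)))
        (fun s _ => hstep s)]
    rw [intervalIntegral.integral_eq_sub_of_hasDerivAt (fun s _ => hg s)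
        (hcont.intervalIntegrable S t)]
    have : M (fun _ : Fin (k+1) => x S - x S) = 0 := by
      have : (fun _ : Fin (k+1) => x S - x S) = fun _ => (0 : V) := by funext; simp
      rw [this]
      exact M.map_coord_zero 0 rfl
    rw [this]
    simp

end aux

/-- for a polynomial one-form `p(v)(w) = Σ_{k=0}^n (D^k p)(0)(v^{⊗k}/k!)(w)`
(with `(D^k p)(0)` symmetric in its first `k` arguments) and a smooth path `x` with
`x_S = 0`, the classical integral equals a linear combination of iterated integrals:
`∫_S^T p(x_r) dx_r = Σ_{k=0}^n (D^k p)(0) X^{k+1}_{S,T}` where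
`X^{k+1}_{S,T} = ∫_{S<u₁<⋯<u_{k+1}<T} dx_{u₁} ⊗ ⋯ ⊗ dx_{u_{k+1}}`. -/
theorem polynomial_one_form_integral_eq_iterated_integrals
    {V U : Type*} [NormedAddCommGroup V] [NormedSpace ℝ V]
    [NormedAddCommGroup U] [NormedSpace ℝ U] [CompleteSpace U]
    (n : ℕ) (D : (k : ℕ) → ContinuousMultilinearMap ℝ (fun _ : Fin (k + 1) => V) U)
    (hsym : ∀ k, k ≤ n → ∀ (a : Fin (k + 1) → V) (σ : Equiv.Perm (Fin (k + 1))),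
      σ (Fin.last k) = Fin.last k → D k a = D k (a ∘ σ))
    (S T : ℝ) (hST : S ≤ T) (x : ℝ → V) (hx : ContDiff ℝ 1 x) (hxS : x S = 0) :
    (∫ r in S..T, ∑ k ∈ Finset.range (n + 1),
        (1 / (Nat.factorial k : ℝ)) • D k (Fin.snoc (fun _ => x r) (deriv x r))) =
      ∑ k ∈ Finset.range (n + 1),
        simplexIntegral (k + 1) (fun u => D k (fun i => deriv x (u i))) S T := by
  have hxd : Differentiable ℝ x := hx.differentiable one_ne_zero
  have hxc : Continuous (deriv x) := hx.continuous_deriv le_rfl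
  have hcont : ∀ k, Continuous fun r =>
      (1 / (Nat.factorial k : ℝ)) • D k (Fin.snoc (fun _ => x r) (deriv x r)) := by
    intro k
    apply Continuous.const_smul
    apply (D k).coe_continuous.comp
    apply continuous_pi
    intro j
    refine Fin.lastCases ?_ (fun q => ?_) j
    · simpa using hxc
    · simpa using hx.continuous
  rw [intervalIntegral.integral_finset_sum
      (fun k _ => (hcont k).intervalIntegrable S T)]
  refine Finset.sum_congr rfl fun k hk => ?_
  have hkn : k ≤ n := Nat.lt_succ_iff.mp (Finset.mem_range.mp hk)
  -- per-k identity
  have hMsym : ∀ (t : ℝ) (a : Fin k → V) (i j : Fin k),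
      D k (Fin.snoc a (deriv x t)) = D k (Fin.snoc (a ∘ Equiv.swap i j) (deriv x t)) := by
    intro t a i j
    rw [← snoc_comp_swap]
    refine hsym k hkn _ (Equiv.swap i.castSucc j.castSucc) ?_
    exact Equiv.swap_apply_of_ne_of_ne (Fin.castSucc_lt_last i).ne' (Fin.castSucc_lt_last j).ne'
  have hRHS : simplexIntegral (k + 1) (fun u => D k (fun i => deriv x (u i))) S T
      = ∫ t in S..T,
          ((Nat.factorial k : ℝ))⁻¹ • D k (Fin.snoc (fun _ => x t - x S) (deriv x t)) := by
    show (∫ t in S..T,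
        simplexIntegral k (fun u => D k (fun i => deriv x ((Fin.snoc u t : Fin (k+1) → ℝ) i))) S t) = _
    refine intervalIntegral.integral_congr fun t _ => ?_
    set N : ContinuousMultilinearMap ℝ (fun _ : Fin k => V) U :=
      (ContinuousLinearMap.apply ℝ U (deriv x t)).compContinuousMultilinearMap (D k).curryRight
      with hN
    have hNapp : ∀ v : Fin k → V, N v = D k (Fin.snoc v (deriv x t)) := fun v => rfl
    have h1 : (fun u : Fin k → ℝ => D k (fun i => deriv x ((Fin.snoc u t : Fin (k+1) → ℝ) i)))
        = fun u => N (fun i => deriv x (u i)) := by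
      funext u
      rw [hNapp]
      congr 1
      exact (Fin.comp_snoc (deriv x) u t)
    rw [h1, aux_key x hx S k N (fun a i j => by rw [hNapp, hNapp]; exact hMsym t a i j) t, hNapp]
  rw [hRHS]
  refine intervalIntegral.integral_congr fun r _ => ?_
  rw [hxS, one_div]
  congr 2
  funext m
  refine Fin.lastCases ?_ (fun q => ?_) m <;> simp
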